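/- arXiv:0808.3651 — 3 statements merged into one kernel-verified Lean document; each statement's English description precedes it below -/
import Mathlib

section
/- Weight-function lifting is transitive: if R1, R2 ⊆ S × S and μ1 ⊑_{R1} μ2 and μ2 ⊑_{R2} μ3 for stochastic distributions μ1, μ2, μ3 on a finite set S, then μ1 ⊑_{R1∘R2} μ3, where R1∘R2 is relational composition. -/
open Finset

variable {S : Type*} [Fintype S]

/-- `μ ⊑_R μ'` for stochastic distributions: there is `Δ : S × S → [0,1]`
with `Δ(s,s') > 0 ⟹ (s,s') ∈ R`, rows summing to `μ` and columns to `μ'`. -/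
def Lift (R : Set (S × S)) (μ μ' : S → ℝ) : Prop :=
  ∃ Δ : S → S → ℝ,
    (∀ s t, 0 ≤ Δ s t ∧ Δ s t ≤ 1) ∧
    (∀ s t, 0 < Δ s t → (s, t) ∈ R) ∧
    (∀ s, μ s = ∑ t, Δ s t) ∧
    (∀ t, μ' t = ∑ s, Δ s t)

/-- weight-function lifting is transitive along relational composition. -/
theorem lift_trans (μ₁ μ₂ μ₃ : S → ℝ)
    (h₁0 : ∀ s, 0 ≤ μ₁ s) (h₁1 : ∑ s, μ₁ s = 1)
    (h₂0 : ∀ s, 0 ≤ μ₂ s) (h₂1 : ∑ s, μ₂ s = 1)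
    (h₃0 : ∀ s, 0 ≤ μ₃ s) (h₃1 : ∑ s, μ₃ s = 1)
    (R₁ R₂ : Set (S × S))
    (h12 : Lift R₁ μ₁ μ₂) (h23 : Lift R₂ μ₂ μ₃) :
    Lift {p : S × S | ∃ t, (p.1, t) ∈ R₁ ∧ (t, p.2) ∈ R₂} μ₁ μ₃ := by
  obtain ⟨Δ₁, hb1, hr1, hrow1, hcol1⟩ := h12
  obtain ⟨Δ₂, hb2, hr2, hrow2, hcol2⟩ := h23
  -- Δ₁ s t ≤ μ₂ t  (column sums)
  have hle1 : ∀ s t, Δ₁ s t ≤ μ₂ t := by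
    intro s t
    rw [hcol1 t]
    exact Finset.single_le_sum (fun i _ => (hb1 i t).1) (Finset.mem_univ s)
  -- Δ₂ t u ≤ μ₂ t  (row sums)
  have hle2 : ∀ t u, Δ₂ t u ≤ μ₂ t := by
    intro t u
    rw [hrow2 t]
    exact Finset.single_le_sum (fun i _ => (hb2 t i).1) (Finset.mem_univ u)
  -- if μ₂ t = 0 then Δ₁ s t = 0 and Δ₂ t u = 0
  have hz1 : ∀ s t, μ₂ t = 0 → Δ₁ s t = 0 := fun s t h =>
    le_antisymm (h ▸ hle1 s t) (hb1 s t).1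
  have hz2 : ∀ t u, μ₂ t = 0 → Δ₂ t u = 0 := fun t u h =>
    le_antisymm (h ▸ hle2 t u) (hb2 t u).1
  set Δ : S → S → ℝ := fun s u => ∑ t, if μ₂ t = 0 then 0 else Δ₁ s t * Δ₂ t u / μ₂ t
    with hΔ
  have hterm_nonneg : ∀ s u t, (0:ℝ) ≤ if μ₂ t = 0 then 0 else Δ₁ s t * Δ₂ t u / μ₂ t := by
    intro s u t
    by_cases h : μ₂ t = 0
    · simp [h]
    · rw [if_neg h]
      exact div_nonneg (mul_nonneg (hb1 s t).1 (hb2 t u).1)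
        (lt_of_le_of_ne (h₂0 t) (Ne.symm h)).le
  have hterm_le : ∀ s u t, (if μ₂ t = 0 then 0 else Δ₁ s t * Δ₂ t u / μ₂ t) ≤ Δ₁ s t := by
    intro s u t
    by_cases h : μ₂ t = 0
    · rw [if_pos h]; exact (hb1 s t).1
    · rw [if_neg h]
      have hpos : 0 < μ₂ t := lt_of_le_of_ne (h₂0 t) (Ne.symm h)
      rw [div_le_iff₀ hpos]
      exact mul_le_mul_of_nonneg_left (hle2 t u) (hb1 s t).1
  have hΔnonneg : ∀ s u, 0 ≤ Δ s u := fun s u =>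
    Finset.sum_nonneg fun t _ => hterm_nonneg s u t
  have hΔle : ∀ s u, Δ s u ≤ 1 := by
    intro s u
    calc Δ s u ≤ ∑ t, Δ₁ s t := Finset.sum_le_sum fun t _ => hterm_le s u t
      _ = μ₁ s := (hrow1 s).symm
      _ ≤ ∑ s', μ₁ s' := Finset.single_le_sum (fun i _ => h₁0 i) (Finset.mem_univ s)
      _ = 1 := h₁1
  refine ⟨Δ, fun s u => ⟨hΔnonneg s u, hΔle s u⟩, ?_, ?_, ?_⟩
  · intro s u hpos
    obtain ⟨t, _, ht⟩ := Finset.exists_lt_of_sum_lt (by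
      simpa using hpos : ∑ t, (0:ℝ) < ∑ t, if μ₂ t = 0 then 0 else Δ₁ s t * Δ₂ t u / μ₂ t)
    by_cases h : μ₂ t = 0
    · simp [h] at ht
    · rw [if_neg h] at ht
      have hμpos : 0 < μ₂ t := lt_of_le_of_ne (h₂0 t) (Ne.symm h)
      have hmul : 0 < Δ₁ s t * Δ₂ t u := by
        by_contra hc
        push_neg at hc
        have := div_nonpos_of_nonpos_of_nonneg hc hμpos.le
        linarith
      have h1 : 0 < Δ₁ s t := by
        rcases lt_or_eq_of_le (hb1 s t).1 with h' | h'
        · exact h'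
        · rw [← h'] at hmul; linarith
      have h2 : 0 < Δ₂ t u := by
        rcases lt_or_eq_of_le (hb2 t u).1 with h' | h'
        · exact h'
        · rw [← h'] at hmul; nlinarith
      exact ⟨t, hr1 s t h1, hr2 t u h2⟩
  · intro s
    rw [hrow1 s]
    rw [show (∑ u, Δ s u) = ∑ t, ∑ u, (if μ₂ t = 0 then 0 else Δ₁ s t * Δ₂ t u / μ₂ t) from
      Finset.sum_comm]
    refine Finset.sum_congr rfl fun t _ => ?_
    by_cases h : μ₂ t = 0
    · simp [h, hz1 s t h]
    · have hpos : 0 < μ₂ t := lt_of_le_of_ne (h₂0 t) (Ne.symm h)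
      simp only [if_neg h]
      rw [show (∑ u, Δ₁ s t * Δ₂ t u / μ₂ t) = (∑ u, Δ₂ t u) * Δ₁ s t / μ₂ t by
        rw [Finset.sum_mul, Finset.sum_div]
        exact Finset.sum_congr rfl fun u _ => by ring]
      rw [← hrow2 t]
      field_simp
  · intro u
    rw [hcol2 u]
    rw [show (∑ s, Δ s u) = ∑ t, ∑ s, (if μ₂ t = 0 then 0 else Δ₁ s t * Δ₂ t u / μ₂ t) from
      Finset.sum_comm]
    refine Finset.sum_congr rfl fun t _ => ?_
    by_cases h : μ₂ t = 0
    · simp [h, hz2 t u h]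
    · have hpos : 0 < μ₂ t := lt_of_le_of_ne (h₂0 t) (Ne.symm h)
      simp only [if_neg h]
      rw [show (∑ s, Δ₁ s t * Δ₂ t u / μ₂ t) = (∑ s, Δ₁ s t) * Δ₂ t u / μ₂ t by
        rw [Finset.sum_mul, Finset.sum_div]]
      rw [← hcol1 t]
      field_simp
end

section
/- Let S be a finite set, R ⊆ S × S, and μ, μ' stochastic distributions on S. Then μ ⊑_R μ' if and only if the maximum flow in the bipartite network N(μ, μ', R) has value 1, where N(μ,μ',R) has source 𝓈, sink 𝓉, vertices for each element of support(μ) and a disjoint copy of support(μ'), edges 𝓈→s with capacity μ(s), edges t̄→𝓉 with capacity μ'(t), and edges s→t̄ with infinite capacity whenever (s,t) ∈ R. -/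
open Finset
open scoped Classical ENNReal

/-- Vertices of the bipartite network `N(μ, μ', R)`: a source `src`, a sink
`snk`, left copies `lft s` of states and right copies `rgt t` of states. -/
abbrev Vert (S : Type*) := (Bool × S) ⊕ Bool

variable {S : Type*} [Fintype S]

def src {S : Type*} : Vert S := Sum.inr false
def snk {S : Type*} : Vert S := Sum.inr true
def lft {S : Type*} (s : S) : Vert S := Sum.inl (false, s)
def rgt {S : Type*} (t : S) : Vert S := Sum.inl (true, t)

/-- Capacities of `N(μ, μ', R)`: `μ(s)` on `src → lft s`, `μ'(t)` on
`rgt t → snk`, infinite capacity on `lft s → rgt t` whenever `(s,t) ∈ R`,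
and `0` (no edge) otherwise. -/
noncomputable def cap (μ μ' : S → ℝ) (R : Set (S × S)) : Vert S → Vert S → ℝ≥0∞ :=
  fun v w =>
    match v, w with
    | Sum.inr false, Sum.inl (false, s) => ENNReal.ofReal (μ s)
    | Sum.inl (true, t), Sum.inr true => ENNReal.ofReal (μ' t)
    | Sum.inl (false, s), Sum.inl (true, t) => if (s, t) ∈ R then ⊤ else 0
    | _, _ => 0

/-- `f` is a flow on the network with capacities `c`: capacity constraints,
antisymmetry, and conservation at every internal vertex. -/
def IsFlow (c : Vert S → Vert S → ℝ≥0∞) (f : Vert S → Vert S → ℝ) : Prop :=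
  (∀ v w, ENNReal.ofReal (f v w) ≤ c v w) ∧
  (∀ v w, f v w = - f w v) ∧
  (∀ v : Vert S, v ≠ src → v ≠ snk → (∑ u, f u v) = 0)

/-- The value of a flow: the net outflow of the source. -/
def flowValue (f : Vert S → Vert S → ℝ) : ℝ := ∑ w, f src w

/- ---------- auxiliary material ---------- -/

lemma sum_vert (g : Vert S → ℝ) :
    ∑ v, g v = g src + g snk + (∑ s, g (lft s)) + ∑ t, g (rgt t) := by
  rw [Fintype.sum_sum_type, Fintype.sum_prod_type, Fintype.sum_bool, Fintype.sum_bool]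
  simp only [src, snk, lft, rgt]
  ring

lemma real_le_of_ofReal_le {a b : ℝ} (hb : 0 ≤ b)
    (h : ENNReal.ofReal a ≤ ENNReal.ofReal b) : a ≤ b := by
  rcases le_or_gt a 0 with h' | h'
  · linarith
  · exact (ENNReal.ofReal_le_ofReal_iff hb).mp h

lemma nonpos_of_ofReal_le_zero {a : ℝ} (h : ENNReal.ofReal a ≤ 0) : a ≤ 0 := by
  simpa [ENNReal.ofReal_eq_zero] using le_antisymm h zero_le

section FlowFacts

variable {μ μ' : S → ℝ} {R : Set (S × S)} {f : Vert S → Vert S → ℝ}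

lemma flow_nonpos (hf : IsFlow (cap μ μ' R) f) {v w : Vert S}
    (h : cap μ μ' R v w = 0) : f v w ≤ 0 := by
  have := hf.1 v w
  rw [h] at this
  exact nonpos_of_ofReal_le_zero this

lemma flow_zero (hf : IsFlow (cap μ μ' R) f) {v w : Vert S}
    (h1 : cap μ μ' R v w = 0) (h2 : cap μ μ' R w v = 0) : f v w = 0 := by
  have a := flow_nonpos hf h1
  have b := flow_nonpos hf h2
  have := hf.2.1 v w
  linarith

lemma f_src_snk (hf : IsFlow (cap μ μ' R) f) : f src snk = 0 :=
  flow_zero hf (by simp [cap, src, snk]) (by simp [cap, src, snk])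

lemma f_src_rgt (hf : IsFlow (cap μ μ' R) f) (t : S) : f src (rgt t) = 0 :=
  flow_zero hf (by simp [cap, src, rgt]) (by simp [cap, src, rgt])

lemma f_lft_snk (hf : IsFlow (cap μ μ' R) f) (s : S) : f (lft s) snk = 0 :=
  flow_zero hf (by simp [cap, lft, snk]) (by simp [cap, lft, snk])

lemma f_lft_lft (hf : IsFlow (cap μ μ' R) f) (s s' : S) : f (lft s) (lft s') = 0 :=
  flow_zero hf (by simp [cap, lft]) (by simp [cap, lft])

lemma f_rgt_rgt (hf : IsFlow (cap μ μ' R) f) (t t' : S) : f (rgt t) (rgt t') = 0 :=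
  flow_zero hf (by simp [cap, rgt]) (by simp [cap, rgt])

lemma f_self (hf : IsFlow (cap μ μ' R) f) (v : Vert S) : f v v = 0 := by
  have := hf.2.1 v v; linarith

lemma f_lft_rgt_nonneg (hf : IsFlow (cap μ μ' R) f) (s t : S) :
    0 ≤ f (lft s) (rgt t) := by
  have h : f (rgt t) (lft s) ≤ 0 := flow_nonpos hf (by simp [cap, rgt, lft])
  have := hf.2.1 (lft s) (rgt t)
  linarith

lemma f_src_lft_le (hf : IsFlow (cap μ μ' R) f) (hμ0 : ∀ s, 0 ≤ μ s) (s : S) :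
    f src (lft s) ≤ μ s := by
  have := hf.1 src (lft s)
  simp only [cap, src, lft] at this
  exact real_le_of_ofReal_le (hμ0 s) this

lemma f_rgt_snk_le (hf : IsFlow (cap μ μ' R) f) (hμ'0 : ∀ t, 0 ≤ μ' t) (t : S) :
    f (rgt t) snk ≤ μ' t := by
  have := hf.1 (rgt t) snk
  simp only [cap, rgt, snk] at this
  exact real_le_of_ofReal_le (hμ'0 t) this

lemma flowValue_eq (hf : IsFlow (cap μ μ' R) f) :
    flowValue f = ∑ s, f src (lft s) := by
  unfold flowValue
  rw [sum_vert (fun w => f src w)]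
  simp [f_self hf, f_src_snk hf, f_src_rgt hf]

lemma flowValue_le_one (hf : IsFlow (cap μ μ' R) f)
    (hμ0 : ∀ s, 0 ≤ μ s) (hμ1 : ∑ s, μ s = 1) : flowValue f ≤ 1 := by
  rw [flowValue_eq hf, ← hμ1]
  exact Finset.sum_le_sum fun s _ => f_src_lft_le hf hμ0 s

/-- total flow into the sink equals the flow value -/
lemma sum_into_snk (hf : IsFlow (cap μ μ' R) f) :
    ∑ u, f u snk = flowValue f := by
  have hskew : ∀ v w, f v w = - f w v := hf.2.1
  have htot : (∑ v, ∑ u, f u v) = 0 := by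
    have h1 : (∑ v, ∑ u, f u v) = ∑ u, ∑ v, f u v := Finset.sum_comm
    have h2 : (∑ u : Vert S, ∑ v, f u v) = - ∑ v, ∑ u, f u v := by
      rw [← Finset.sum_neg_distrib]
      refine Finset.sum_congr rfl fun u _ => ?_
      rw [← Finset.sum_neg_distrib]
      exact Finset.sum_congr rfl fun v _ => hskew u v
    have := h1.trans h2
    linarith
  rw [sum_vert (fun v => ∑ u, f u v)] at htot
  have hl : ∀ s : S, (∑ u, f u (lft s)) = 0 := fun s =>
    hf.2.2 (lft s) (by simp [lft, src]) (by simp [lft, snk])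
  have hr : ∀ t : S, (∑ u, f u (rgt t)) = 0 := fun t =>
    hf.2.2 (rgt t) (by simp [rgt, src]) (by simp [rgt, snk])
  simp only [hl, hr, Finset.sum_const_zero, add_zero] at htot
  have hsrc : (∑ u, f u src) = - flowValue f := by
    unfold flowValue
    rw [← Finset.sum_neg_distrib]
    exact Finset.sum_congr rfl fun u _ => hskew u src
  linarith

end FlowFacts

/-- The flow built from a coupling `Δ`. -/
noncomputable def mkFlow (μ μ' : S → ℝ) (Δ : S → S → ℝ) : Vert S → Vert S → ℝ :=
  fun v w =>
    match v, w with
    | Sum.inr false, Sum.inl (false, s) => μ s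
    | Sum.inl (false, s), Sum.inr false => -(μ s)
    | Sum.inl (false, s), Sum.inl (true, t) => Δ s t
    | Sum.inl (true, t), Sum.inl (false, s) => -(Δ s t)
    | Sum.inl (true, t), Sum.inr true => μ' t
    | Sum.inr true, Sum.inl (true, t) => -(μ' t)
    | _, _ => 0

/-- `μ ⊑_R μ'` holds iff the maximum flow of the network
`N(μ, μ', R)` has value `1`. -/
theorem lift_iff_maxflow_one (μ μ' : S → ℝ) (R : Set (S × S))
    (hμ0 : ∀ s, 0 ≤ μ s) (hμ1 : ∑ s, μ s = 1)
    (hμ'0 : ∀ s, 0 ≤ μ' s) (hμ'1 : ∑ s, μ' s = 1) :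
    (∃ Δ : S → S → ℝ,
      (∀ s t, 0 ≤ Δ s t ∧ Δ s t ≤ 1) ∧
      (∀ s t, 0 < Δ s t → (s, t) ∈ R) ∧
      (∀ s, μ s = ∑ t, Δ s t) ∧
      (∀ t, μ' t = ∑ s, Δ s t)) ↔
    (∃ f, IsFlow (cap μ μ' R) f ∧
      (∀ g, IsFlow (cap μ μ' R) g → flowValue g ≤ flowValue f) ∧
      flowValue f = 1) := by
  constructor
  · rintro ⟨Δ, h01, hR, hμΔ, hμ'Δ⟩
    refine ⟨mkFlow μ μ' Δ, ⟨?_, ?_, ?_⟩, ?_, ?_⟩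
    · -- capacity constraints
      have hΔ0 : ∀ s t, 0 ≤ Δ s t := fun s t => (h01 s t).1
      rintro (⟨b, x⟩ | b) (⟨b', y⟩ | b') <;> rcases b with _ | _ <;> rcases b' with _ | _ <;>
        simp only [mkFlow, cap] <;>
        first
        | simp [nonpos_iff_eq_zero, ENNReal.ofReal_eq_zero, neg_nonpos, hμ0, hμ'0, hΔ0]
        | (by_cases h : (x, y) ∈ R
           · simp [h]
           · simp [h, ENNReal.ofReal_eq_zero.mpr (not_lt.mp (fun hlt => h (hR x y hlt)))])
    · -- antisymmetry
      rintro (⟨b, x⟩ | b) (⟨b', y⟩ | b') <;> rcases b with _ | _ <;> rcases b' with _ | _ <;>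
        simp [mkFlow]
    · -- conservation
      rintro (⟨b, x⟩ | b) hv1 hv2
      · rcases b with _ | _
        · -- lft x
          show (∑ u, mkFlow μ μ' Δ u (lft x)) = 0
          rw [sum_vert (fun u => mkFlow μ μ' Δ u (lft x))]
          simp only [mkFlow, src, snk, lft, rgt, Finset.sum_const_zero,
            Finset.sum_neg_distrib]
          have := hμΔ x
          linarith
        · -- rgt x
          show (∑ u, mkFlow μ μ' Δ u (rgt x)) = 0
          rw [sum_vert (fun u => mkFlow μ μ' Δ u (rgt x))]
          simp only [mkFlow, src, snk, lft, rgt, Finset.sum_const_zero,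
            Finset.sum_neg_distrib]
          have := hμ'Δ x
          linarith
      · rcases b with _ | _
        · exact absurd rfl hv1
        · exact absurd rfl hv2
    · -- maximality
      intro g hg
      have := flowValue_le_one hg hμ0 hμ1
      have hval : flowValue (mkFlow μ μ' Δ) = 1 := by
        unfold flowValue
        rw [sum_vert (fun w => mkFlow μ μ' Δ src w)]
        simp only [mkFlow, src, snk, lft, rgt]
        simpa using hμ1
      rw [hval]; exact this
    · unfold flowValue
      rw [sum_vert (fun w => mkFlow μ μ' Δ src w)]
      simp only [mkFlow, src, snk, lft, rgt]
      simpa using hμ1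
  · rintro ⟨f, hf, _, hval⟩
    -- saturation of source edges
    have hle : ∀ s, f src (lft s) ≤ μ s := f_src_lft_le hf hμ0
    have hsum : (∑ s, f src (lft s)) = 1 := by rw [← flowValue_eq hf, hval]
    have hsat : ∀ s, f src (lft s) = μ s := by
      intro s
      by_contra hne
      have hlt : f src (lft s) < μ s := lt_of_le_of_ne (hle s) hne
      have : (∑ s, f src (lft s)) < ∑ s, μ s :=
        Finset.sum_lt_sum (fun i _ => hle i) ⟨s, Finset.mem_univ s, hlt⟩
      rw [hsum, hμ1] at this
      exact lt_irrefl _ this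
    -- saturation of sink edges
    have hle' : ∀ t, f (rgt t) snk ≤ μ' t := f_rgt_snk_le hf hμ'0
    have hsum' : (∑ t, f (rgt t) snk) = 1 := by
      have h := sum_into_snk hf
      rw [hval] at h
      rw [sum_vert (fun u => f u snk)] at h
      have h1 : f src snk = 0 := f_src_snk hf
      have h2 : f snk snk = 0 := f_self hf snk
      have h3 : (∑ s, f (lft s) snk) = 0 := by
        exact Finset.sum_eq_zero fun s _ => f_lft_snk hf s
      rw [h1, h2, h3] at h
      linarith
    have hsat' : ∀ t, f (rgt t) snk = μ' t := by
      intro t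
      by_contra hne
      have hlt : f (rgt t) snk < μ' t := lt_of_le_of_ne (hle' t) hne
      have : (∑ t, f (rgt t) snk) < ∑ t, μ' t :=
        Finset.sum_lt_sum (fun i _ => hle' i) ⟨t, Finset.mem_univ t, hlt⟩
      rw [hsum', hμ'1] at this
      exact lt_irrefl _ this
    -- conservation consequences
    have hrow : ∀ s, μ s = ∑ t, f (lft s) (rgt t) := by
      intro s
      have h := hf.2.2 (lft s) (by simp [lft, src]) (by simp [lft, snk])
      rw [sum_vert (fun u => f u (lft s))] at h
      have h1 : f src (lft s) = μ s := hsat s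
      have h2 : f snk (lft s) = 0 := by
        have := hf.2.1 snk (lft s); rw [this, f_lft_snk hf s]; ring
      have h3 : (∑ s', f (lft s') (lft s)) = 0 :=
        Finset.sum_eq_zero fun s' _ => f_lft_lft hf s' s
      have h4 : (∑ t, f (rgt t) (lft s)) = - ∑ t, f (lft s) (rgt t) := by
        rw [← Finset.sum_neg_distrib]
        exact Finset.sum_congr rfl fun t _ => hf.2.1 (rgt t) (lft s)
      rw [h1, h2, h3, h4] at h
      linarith
    have hcol : ∀ t, μ' t = ∑ s, f (lft s) (rgt t) := by
      intro t
      have h := hf.2.2 (rgt t) (by simp [rgt, src]) (by simp [rgt, snk])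
      rw [sum_vert (fun u => f u (rgt t))] at h
      have h1 : f src (rgt t) = 0 := f_src_rgt hf t
      have h2 : f snk (rgt t) = - μ' t := by
        have := hf.2.1 snk (rgt t); rw [this, hsat' t]
      have h3 : (∑ t', f (rgt t') (rgt t)) = 0 :=
        Finset.sum_eq_zero fun t' _ => f_rgt_rgt hf t' t
      rw [h1, h2, h3] at h
      linarith
    have hΔ0 : ∀ s t, 0 ≤ f (lft s) (rgt t) := f_lft_rgt_nonneg hf
    refine ⟨fun s t => f (lft s) (rgt t), ?_, ?_, hrow, hcol⟩
    · intro s t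
      refine ⟨hΔ0 s t, ?_⟩
      have h1 : f (lft s) (rgt t) ≤ ∑ t', f (lft s) (rgt t') :=
        Finset.single_le_sum (fun i _ => hΔ0 s i) (Finset.mem_univ t)
      have h2 : μ s ≤ ∑ s', μ s' :=
        Finset.single_le_sum (fun i _ => hμ0 i) (Finset.mem_univ s)
      rw [← hrow s] at h1
      rw [hμ1] at h2
      linarith
    · intro s t hpos
      by_contra hR
      have hc : cap μ μ' R (lft s) (rgt t) = 0 := by simp [cap, lft, rgt, hR]
      have := flow_nonpos hf hc
      linarith
end

section
/- Let D be a DTMC, R ⊆ S×S, (s1,s2) ∈ R, and suppose there is s1' ∈ post(s1) with (s1',s2)∉R and s2' ∈ post(s2) with (s1,s2')∉R. Let A1,…,A_h be the equivalence classes of the equivalence relation generated by H = R ∩ [(post(s1)∪{s1}) × (post(s2)∪{s2})], with s1, s2 ∈ A_h. If s1 ≾_R s2 with witnessing data (δ1,δ2,Δ,K1,K2), then for all i < h: (1) P(s1,Aᵢ) > 0 and P(s2,Aᵢ) > 0, and (2) P(s1,Aᵢ)/P(s2,Aᵢ) = K1/K2. -/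
open Finset
open scoped Classical

variable {S : Type*} [Fintype S] {AP : Type*}

/-- Let `A₁, …, A_h` be the classes of the equivalence relation
generated by `H = R ∩ [(post(s₁) ∪ {s₁}) × (post(s₂) ∪ {s₂})]`, with
`s₁, s₂ ∈ A_h`.  If `s₂` weakly simulates `s₁` up to `R` with witnessing data
`(δ₁, δ₂, Δ, K₁, K₂)` and both states have a visible step, then every class `A`
other than the one containing `s₁` satisfies `P(s₁,A) > 0`, `P(s₂,A) > 0` and
`P(s₁,A)/P(s₂,A) = K₁/K₂`. -/
theorem class_ratio (P : S → S → ℝ) (L : S → Set AP)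
    (hP0 : ∀ s u, 0 ≤ P s u)
    (hrows : ∀ s, (∑ u, P s u) = 0 ∨ (∑ u, P s u) = 1)
    (R : Set (S × S)) (s₁ s₂ : S) (hR : (s₁, s₂) ∈ R) (hL : L s₁ = L s₂)
    (hvis₁ : ∃ u, 0 < P s₁ u ∧ (u, s₂) ∉ R)
    (hvis₂ : ∃ u, 0 < P s₂ u ∧ (s₁, u) ∉ R)
    -- witnessing data for `s₁ ≾_R s₂`
    (δ₁ δ₂ : S → ℝ) (Δ : S → S → ℝ)
    (hδ₁ : ∀ u, 0 ≤ δ₁ u ∧ δ₁ u ≤ 1) (hδ₂ : ∀ u, 0 ≤ δ₂ u ∧ δ₂ u ≤ 1)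
    (hV₁ : ∀ v, 0 < P s₁ v → δ₁ v < 1 → (v, s₂) ∈ R)
    (hV₂ : ∀ v, 0 < P s₂ v → δ₂ v < 1 → (s₁, v) ∈ R)
    (hΔ01 : ∀ u v, 0 ≤ Δ u v ∧ Δ u v ≤ 1)
    (hΔpos : ∀ u v, 0 < Δ u v →
      (0 < P s₁ u ∧ 0 < δ₁ u) ∧ (0 < P s₂ v ∧ 0 < δ₂ v) ∧ (u, v) ∈ R)
    (hΔw : 0 < (∑ u, δ₁ u * P s₁ u) → 0 < (∑ u, δ₂ u * P s₂ u) →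
      ∀ w, (∑ u, δ₁ u * P s₁ u) * (∑ v, Δ w v) = P s₁ w * δ₁ w ∧
           (∑ u, δ₂ u * P s₂ u) * (∑ v, Δ v w) = P s₂ w * δ₂ w)
    -- the classes of the equivalence relation generated by `H`
    (A : Set S)
    (hA : ∃ a, (0 < P s₁ a ∨ 0 < P s₂ a ∨ a = s₁ ∨ a = s₂) ∧
      A = {b | Relation.EqvGen
        (fun x y => (x, y) ∈ R ∧ (0 < P s₁ x ∨ x = s₁) ∧ (0 < P s₂ y ∨ y = s₂))
        a b})
    (hAs₁ : s₁ ∉ A) :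
    (0 < ∑ u ∈ Finset.univ.filter (· ∈ A), P s₁ u) ∧
    (0 < ∑ u ∈ Finset.univ.filter (· ∈ A), P s₂ u) ∧
    (∑ u ∈ Finset.univ.filter (· ∈ A), P s₁ u) /
        (∑ u ∈ Finset.univ.filter (· ∈ A), P s₂ u) =
      (∑ u, δ₁ u * P s₁ u) / (∑ u, δ₂ u * P s₂ u) := by
  obtain ⟨a, ha, hAeq⟩ := hA
  set H : S → S → Prop :=
    fun x y => (x, y) ∈ R ∧ (0 < P s₁ x ∨ x = s₁) ∧ (0 < P s₂ y ∨ y = s₂) with hHdef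
  have memA : ∀ b, b ∈ A ↔ Relation.EqvGen H a b := by
    intro b; rw [hAeq]; rfl
  set K₁ : ℝ := ∑ u, δ₁ u * P s₁ u with hK₁def
  set K₂ : ℝ := ∑ u, δ₂ u * P s₂ u with hK₂def
  -- K₁ > 0
  have hK₁ : 0 < K₁ := by
    obtain ⟨u, hu, hur⟩ := hvis₁
    have hδu : δ₁ u = 1 := by
      by_contra h
      exact hur (hV₁ u hu (lt_of_le_of_ne (hδ₁ u).2 h))
    have : 0 < δ₁ u * P s₁ u := by rw [hδu]; simpa using hu
    linarith [Finset.single_le_sum (fun i (_ : i ∈ Finset.univ) =>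
      mul_nonneg (hδ₁ i).1 (hP0 s₁ i)) (Finset.mem_univ u)]
  have hK₂ : 0 < K₂ := by
    obtain ⟨u, hu, hur⟩ := hvis₂
    have hδu : δ₂ u = 1 := by
      by_contra h
      exact hur (hV₂ u hu (lt_of_le_of_ne (hδ₂ u).2 h))
    have : 0 < δ₂ u * P s₂ u := by rw [hδu]; simpa using hu
    linarith [Finset.single_le_sum (fun i (_ : i ∈ Finset.univ) =>
      mul_nonneg (hδ₂ i).1 (hP0 s₂ i)) (Finset.mem_univ u)]
  have hW := hΔw hK₁ hK₂
  -- s₂ ∉ A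
  have hs₂A : s₂ ∉ A := by
    intro hs₂
    apply hAs₁
    rw [memA] at hs₂ ⊢
    exact hs₂.trans _ _ _ ((Relation.EqvGen.rel s₁ s₂ ⟨hR, Or.inr rfl, Or.inr rfl⟩).symm _ _)
  -- δ₁ = 1 on A ∩ post(s₁)
  have hδ₁A : ∀ u ∈ A, 0 < P s₁ u → δ₁ u = 1 := by
    intro u huA hp
    by_contra h
    have hRu : (u, s₂) ∈ R := hV₁ u hp (lt_of_le_of_ne (hδ₁ u).2 h)
    apply hs₂A
    rw [memA] at huA ⊢
    exact huA.trans _ _ _ (Relation.EqvGen.rel u s₂ ⟨hRu, Or.inl hp, Or.inr rfl⟩)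
  have hδ₂A : ∀ v ∈ A, 0 < P s₂ v → δ₂ v = 1 := by
    intro v hvA hp
    by_contra h
    have hRv : (s₁, v) ∈ R := hV₂ v hp (lt_of_le_of_ne (hδ₂ v).2 h)
    apply hAs₁
    rw [memA] at hvA ⊢
    exact hvA.trans _ _ _ ((Relation.EqvGen.rel s₁ v ⟨hRv, Or.inr rfl, Or.inl hp⟩).symm _ _)
  -- Δ-closure of A
  have hclΔ : ∀ u v, 0 < Δ u v → H u v := by
    intro u v hpos
    obtain ⟨⟨h1, _⟩, ⟨h2, _⟩, h3⟩ := hΔpos u v hpos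
    exact ⟨h3, Or.inl h1, Or.inl h2⟩
  have hcl₁ : ∀ u v, u ∈ A → 0 < Δ u v → v ∈ A := by
    intro u v huA hpos
    rw [memA] at huA ⊢
    exact huA.trans _ _ _ (Relation.EqvGen.rel u v (hclΔ u v hpos))
  have hcl₂ : ∀ u v, v ∈ A → 0 < Δ u v → u ∈ A := by
    intro u v hvA hpos
    rw [memA] at hvA ⊢
    exact hvA.trans _ _ _ ((Relation.EqvGen.rel u v (hclΔ u v hpos)).symm _ _)
  set FA : Finset S := Finset.univ.filter (· ∈ A) with hFAdef
  have hmemFA : ∀ u, u ∈ FA ↔ u ∈ A := by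
    intro u; simp [hFAdef]
  have hΔzero : ∀ u v, u ∉ A ∨ v ∉ A → (u ∈ A ∨ v ∈ A) → Δ u v = 0 := by
    intro u v h h'
    by_contra hne
    have hpos : 0 < Δ u v := lt_of_le_of_ne (hΔ01 u v).1 (Ne.symm hne)
    rcases h' with h' | h'
    · rcases h with h | h
      · exact h h'
      · exact h (hcl₁ u v h' hpos)
    · rcases h with h | h
      · exact h (hcl₂ u v h' hpos)
      · exact h h'
  set T : ℝ := ∑ u ∈ FA, ∑ v ∈ FA, Δ u v with hTdef
  -- first sum
  have hS1 : (∑ u ∈ FA, P s₁ u) = K₁ * T := by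
    have step1 : (∑ u ∈ FA, P s₁ u) = ∑ u ∈ FA, δ₁ u * P s₁ u := by
      refine Finset.sum_congr rfl fun u hu => ?_
      rcases eq_or_lt_of_le (hP0 s₁ u) with h | h
      · rw [← h]; ring
      · rw [hδ₁A u ((hmemFA u).1 hu) h]; ring
    have step2 : ∀ u ∈ FA, δ₁ u * P s₁ u = K₁ * ∑ v ∈ FA, Δ u v := by
      intro u hu
      have := (hW u).1
      have hsum : (∑ v, Δ u v) = ∑ v ∈ FA, Δ u v := by
        refine (Finset.sum_subset (Finset.subset_univ FA) ?_).symm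
        intro v _ hv
        exact hΔzero u v (Or.inr (by simpa [hmemFA] using hv)) (Or.inl ((hmemFA u).1 hu))
      rw [← hsum]; linarith [this]
    rw [step1, Finset.sum_congr rfl step2, ← Finset.mul_sum]
  have hS2 : (∑ u ∈ FA, P s₂ u) = K₂ * T := by
    have step1 : (∑ v ∈ FA, P s₂ v) = ∑ v ∈ FA, δ₂ v * P s₂ v := by
      refine Finset.sum_congr rfl fun v hv => ?_
      rcases eq_or_lt_of_le (hP0 s₂ v) with h | h
      · rw [← h]; ring
      · rw [hδ₂A v ((hmemFA v).1 hv) h]; ring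
    have step2 : ∀ v ∈ FA, δ₂ v * P s₂ v = K₂ * ∑ u ∈ FA, Δ u v := by
      intro v hv
      have := (hW v).2
      have hsum : (∑ u, Δ u v) = ∑ u ∈ FA, Δ u v := by
        refine (Finset.sum_subset (Finset.subset_univ FA) ?_).symm
        intro u _ hu
        exact hΔzero u v (Or.inl (by simpa [hmemFA] using hu)) (Or.inr ((hmemFA v).1 hv))
      rw [← hsum]; linarith [this]
    rw [step1, Finset.sum_congr rfl step2, ← Finset.mul_sum, hTdef, Finset.sum_comm]
  -- positivity of T
  have haA : a ∈ A := (memA a).2 (Relation.EqvGen.refl a)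
  have hTnn : 0 ≤ T := Finset.sum_nonneg fun u _ =>
    Finset.sum_nonneg fun v _ => (hΔ01 u v).1
  have hT : 0 < T := by
    have hane₁ : a ≠ s₁ := fun h => hAs₁ (h ▸ haA)
    have hane₂ : a ≠ s₂ := fun h => hs₂A (h ▸ haA)
    have hpa : 0 < P s₁ a ∨ 0 < P s₂ a := by
      rcases ha with h | h | h | h
      · exact Or.inl h
      · exact Or.inr h
      · exact absurd h hane₁
      · exact absurd h hane₂
    rcases hpa with h | h
    · have hle : P s₁ a ≤ ∑ u ∈ FA, P s₁ u :=
        Finset.single_le_sum (fun i _ => hP0 s₁ i) ((hmemFA a).2 haA)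
      have hKT : 0 < K₁ * T := by linarith
      rcases hTnn.lt_or_eq with h' | h'
      · exact h'
      · exfalso; nlinarith
    · have hle : P s₂ a ≤ ∑ u ∈ FA, P s₂ u :=
        Finset.single_le_sum (fun i _ => hP0 s₂ i) ((hmemFA a).2 haA)
      have hKT : 0 < K₂ * T := by linarith
      rcases hTnn.lt_or_eq with h' | h'
      · exact h'
      · exfalso; nlinarith
  refine ⟨by rw [hS1]; positivity, by rw [hS2]; positivity, ?_⟩
  rw [hS1, hS2, mul_comm K₁ T, mul_comm K₂ T, mul_div_mul_left _ _ (ne_of_gt hT)]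
end
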